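/- Kernel of CCC for arbitrary p ≥ 2: taking n = 1 in the CCC construction, the functions F_β^α(x_0) = γ_0 x_0 + θ + αx_0 + βx_0 over ℤ_p yield p codes C_α of size p × p forming a (p, p, p)-CCC, i.e., ∑_{β=0}^{p-1} C_{χ(F_β^{α^1}), χ(F_β^{α^2})}(τ) = 0 for all (α^1,α^2,τ) ≠ (α,α,0) with |τ| < p, and equals p^2 when α^1 = α^2 and τ = 0. -/

import Mathlib

/-- `ζ_q^e` for an integer exponent `e`. -/
noncomputable def zeta (q : ℕ) (e : ℤ) : ℂ :=
  Complex.exp (2 * Real.pi * Complex.I * (e : ℂ) / (q : ℂ))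

lemma zeta_add (q : ℕ) (a b : ℤ) : zeta q (a + b) = zeta q a * zeta q b := by
  rw [zeta, zeta, zeta, ← Complex.exp_add]
  congr 1
  push_cast
  ring

lemma conj_zeta (q : ℕ) (e : ℤ) : (starRingEnd ℂ) (zeta q e) = zeta q (-e) := by
  rw [zeta, zeta, ← Complex.exp_conj]
  congr 1
  simp [map_div₀, map_mul, Complex.conj_I, Complex.conj_ofReal, Complex.conj_ofNat]

lemma zeta_zero (q : ℕ) : zeta q 0 = 1 := by simp [zeta]

lemma zeta_pow (q : ℕ) (m : ℤ) (k : ℕ) : zeta q ((k : ℤ) * m) = (zeta q m) ^ k := by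
  rw [zeta, zeta, ← Complex.exp_nat_mul]
  congr 1
  push_cast
  ring

lemma zeta_eq_one (q : ℕ) (hq : 0 < q) (m : ℤ) (hm : (q : ℤ) ∣ m) : zeta q m = 1 := by
  obtain ⟨k, rfl⟩ := hm
  rw [zeta]
  have hq' : (q : ℂ) ≠ 0 := by exact_mod_cast hq.ne'
  have : 2 * (Real.pi : ℂ) * Complex.I * ((q : ℤ) * k : ℤ) / q = (k : ℤ) * (2 * Real.pi * Complex.I) := by
    push_cast
    field_simp
  rw [this, Complex.exp_int_mul, Complex.exp_two_pi_mul_I, one_zpow]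

lemma zeta_ne_one (q : ℕ) (hq : 0 < q) (m : ℤ) (hm : ¬ (q : ℤ) ∣ m) : zeta q m ≠ 1 := by
  intro h
  rw [zeta, Complex.exp_eq_one_iff] at h
  obtain ⟨n, hn⟩ := h
  apply hm
  refine ⟨n, ?_⟩
  have hq' : (q : ℂ) ≠ 0 := by exact_mod_cast hq.ne'
  have hπ : (Real.pi : ℂ) ≠ 0 := by exact_mod_cast Real.pi_ne_zero
  have h2 : (2 * (Real.pi : ℂ) * Complex.I) ≠ 0 := by
    simp [hπ, Complex.I_ne_zero]
  have hn' : 2 * (Real.pi : ℂ) * Complex.I * (m : ℂ) = 2 * (Real.pi : ℂ) * Complex.I * ((q : ℂ) * n) := by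
    field_simp at hn
    linear_combination (2 * (Real.pi : ℂ) * Complex.I) * hn
  have := mul_left_cancel₀ h2 hn'
  exact_mod_cast this

lemma sum_zeta (p : ℕ) (hp : 0 < p) (m : ℤ) :
    ∑ β ∈ Finset.range p, zeta p ((β : ℤ) * m) = if (p : ℤ) ∣ m then (p : ℂ) else 0 := by
  split_ifs with h
  · have : ∀ β ∈ Finset.range p, zeta p ((β : ℤ) * m) = 1 := by
      intro β _
      exact zeta_eq_one p hp _ (Dvd.dvd.mul_left h _)
    rw [Finset.sum_congr rfl this]
    simp
  · have hne := zeta_ne_one p hp m h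
    have : ∀ β ∈ Finset.range p, zeta p ((β : ℤ) * m) = (zeta p m) ^ β := by
      intro β _; exact zeta_pow p m β
    rw [Finset.sum_congr rfl this, geom_sum_eq hne]
    have : zeta p m ^ p = 1 := by
      rw [← zeta_pow, zeta_eq_one p hp _ ⟨m, rfl⟩]
    rw [this]
    simp

lemma beta_sum_zero (p : ℕ) (hp : 0 < p) (c m : ℤ) (hm : ¬(p:ℤ) ∣ m) :
    ∑ β ∈ Finset.range p, zeta p ((c + (β : ℤ)) * m) = 0 := by
  have e1 : ∀ β ∈ Finset.range p, zeta p ((c + (β:ℤ)) * m)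
      = zeta p (c * m) * zeta p ((β:ℤ) * m) := by
    intro β _; rw [← zeta_add]; congr 1; ring
  rw [Finset.sum_congr rfl e1, ← Finset.mul_sum, sum_zeta p hp, if_neg hm, mul_zero]


/-- Aperiodic cross-correlation of sequences `a, b` of length `N` at integer shift `τ`. -/
noncomputable def accs (N : ℕ) (a b : ℕ → ℂ) (τ : ℤ) : ℂ :=
  if 0 ≤ τ ∧ τ < (N : ℤ) then
    ∑ i ∈ Finset.range (N - τ.toNat), a (i + τ.toNat) * (starRingEnd ℂ) (b i)
  else if -(N : ℤ) < τ ∧ τ < 0 then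
    ∑ i ∈ Finset.range (N - (-τ).toNat), a i * (starRingEnd ℂ) (b (i + (-τ).toNat))
  else 0

/-- Kernel of CCC for arbitrary `p ≥ 2` (n = 1): the functions
`F_β^α(x_0) = γ_0 x_0 + θ + αx_0 + βx_0` over `ℤ_p` yield `p` codes `C_α` of size
`p × p` forming a `(p,p,p)`-CCC: the cross-correlation sum vanishes for all
`(α^1, α^2, τ)` with `|τ| < p` except `α^1 = α^2, τ = 0`, where it equals `p^2`. -/
theorem stmt_14 (p : ℕ) (hp : 2 ≤ p) (γ0 θ : ℕ) (hγ0 : γ0 < p) (hθ : θ < p) :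
    ∀ α1 < p, ∀ α2 < p, ∀ τ : ℤ, |τ| < (p : ℤ) →
      (¬(α1 = α2 ∧ τ = 0) →
        ∑ β ∈ Finset.range p,
          accs p
            (fun I => zeta p (((γ0 : ℤ) + (α1 : ℤ) + (β : ℤ)) * (I : ℤ) + (θ : ℤ)))
            (fun I => zeta p (((γ0 : ℤ) + (α2 : ℤ) + (β : ℤ)) * (I : ℤ) + (θ : ℤ))) τ
          = 0) ∧
      (α1 = α2 ∧ τ = 0 →
        ∑ β ∈ Finset.range p,
          accs p
            (fun I => zeta p (((γ0 : ℤ) + (α1 : ℤ) + (β : ℤ)) * (I : ℤ) + (θ : ℤ)))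
            (fun I => zeta p (((γ0 : ℤ) + (α2 : ℤ) + (β : ℤ)) * (I : ℤ) + (θ : ℤ))) τ
          = (p : ℂ) ^ 2) := by
  intro α1 hα1 α2 hα2 τ hτ
  have hp0 : 0 < p := by omega
  have habs := abs_lt.mp hτ
  constructor
  · intro hne
    rcases lt_trichotomy τ 0 with ht | ht | ht
    · -- negative shift
      have h1 : ¬(0 ≤ τ ∧ τ < (p:ℤ)) := by omega
      have h2 : -(p:ℤ) < τ ∧ τ < 0 := ⟨habs.1, ht⟩
      have htZ : (((-τ).toNat : ℤ)) = -τ := Int.toNat_of_nonneg (by omega)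
      simp only [accs, if_neg h1, if_pos h2]
      have key : ∀ β ∈ Finset.range p,
          (∑ i ∈ Finset.range (p - (-τ).toNat),
            zeta p (((γ0:ℤ)+α1+β) * (i:ℤ) + θ) *
              (starRingEnd ℂ) (zeta p (((γ0:ℤ)+α2+β) * (((i + (-τ).toNat : ℕ)):ℤ) + θ)))
          = zeta p (((γ0:ℤ)+α2+(β:ℤ)) * τ) *
              ∑ i ∈ Finset.range (p - (-τ).toNat), zeta p ((i:ℤ) * ((α1:ℤ) - α2)) := by
        intro β _
        rw [Finset.mul_sum]
        refine Finset.sum_congr rfl fun i _ => ?_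
        rw [conj_zeta, ← zeta_add, ← zeta_add]
        congr 1
        push_cast [htZ]
        ring
      rw [Finset.sum_congr rfl key, ← Finset.sum_mul]
      have hz : ∑ β ∈ Finset.range p, zeta p (((γ0:ℤ)+α2+(β:ℤ)) * τ) = 0 := by
        refine beta_sum_zero p hp0 _ _ ?_
        intro hd
        have := Int.le_of_dvd (by omega : (0:ℤ) < -τ) (dvd_neg.mpr hd)
        omega
      rw [hz, zero_mul]
    · -- τ = 0, α1 ≠ α2
      subst ht
      have hne' : α1 ≠ α2 := fun h => hne ⟨h, rfl⟩
      have h1 : (0:ℤ) ≤ 0 ∧ (0:ℤ) < (p:ℤ) := ⟨le_refl _, by exact_mod_cast hp0⟩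
      simp only [accs, if_pos h1, Int.toNat_zero, Nat.sub_zero, Nat.add_zero]
      have key : ∀ β ∈ Finset.range p,
          (∑ i ∈ Finset.range p,
            zeta p (((γ0:ℤ)+α1+β) * (i:ℤ) + θ) *
              (starRingEnd ℂ) (zeta p (((γ0:ℤ)+α2+β) * (i:ℤ) + θ)))
          = ∑ i ∈ Finset.range p, zeta p ((i:ℤ) * ((α1:ℤ) - α2)) := by
        intro β _
        refine Finset.sum_congr rfl fun i _ => ?_
        rw [conj_zeta, ← zeta_add]
        congr 1
        ring
      rw [Finset.sum_congr rfl key]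
      have hS : ∑ i ∈ Finset.range p, zeta p ((i:ℤ) * ((α1:ℤ) - α2)) = 0 := by
        rw [sum_zeta p hp0, if_neg]
        intro hd
        have := Int.eq_zero_of_abs_lt_dvd hd (abs_lt.mpr ⟨by omega, by omega⟩)
        omega
      rw [hS]
      simp
    · -- positive shift
      have h1 : 0 ≤ τ ∧ τ < (p:ℤ) := ⟨le_of_lt ht, habs.2⟩
      have htZ : ((τ.toNat : ℤ)) = τ := Int.toNat_of_nonneg h1.1
      simp only [accs, if_pos h1]
      have key : ∀ β ∈ Finset.range p,
          (∑ i ∈ Finset.range (p - τ.toNat),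
            zeta p (((γ0:ℤ)+α1+β) * (((i + τ.toNat : ℕ)):ℤ) + θ) *
              (starRingEnd ℂ) (zeta p (((γ0:ℤ)+α2+β) * (i:ℤ) + θ)))
          = zeta p (((γ0:ℤ)+α1+(β:ℤ)) * τ) *
              ∑ i ∈ Finset.range (p - τ.toNat), zeta p ((i:ℤ) * ((α1:ℤ) - α2)) := by
        intro β _
        rw [Finset.mul_sum]
        refine Finset.sum_congr rfl fun i _ => ?_
        rw [conj_zeta, ← zeta_add, ← zeta_add]
        congr 1
        push_cast [htZ]
        ring
      rw [Finset.sum_congr rfl key, ← Finset.sum_mul]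
      have hz : ∑ β ∈ Finset.range p, zeta p (((γ0:ℤ)+α1+(β:ℤ)) * τ) = 0 := by
        refine beta_sum_zero p hp0 _ _ ?_
        intro hd
        have := Int.le_of_dvd ht hd
        omega
      rw [hz, zero_mul]
  · rintro ⟨rfl, rfl⟩
    have h1 : (0:ℤ) ≤ 0 ∧ (0:ℤ) < (p:ℤ) := ⟨le_refl _, by exact_mod_cast hp0⟩
    simp only [accs, if_pos h1, Int.toNat_zero, Nat.sub_zero, Nat.add_zero]
    have key : ∀ β ∈ Finset.range p,
        (∑ i ∈ Finset.range p,
          zeta p (((γ0:ℤ)+α1+β) * (i:ℤ) + θ) *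
            (starRingEnd ℂ) (zeta p (((γ0:ℤ)+α1+β) * (i:ℤ) + θ)))
        = (p : ℂ) := by
      intro β _
      have : ∀ i ∈ Finset.range p,
          zeta p (((γ0:ℤ)+α1+β) * (i:ℤ) + θ) *
            (starRingEnd ℂ) (zeta p (((γ0:ℤ)+α1+β) * (i:ℤ) + θ)) = 1 := by
        intro i _
        rw [conj_zeta, ← zeta_add]
        have : (((γ0:ℤ)+α1+β) * (i:ℤ) + θ) + -((((γ0:ℤ)+α1+β)) * (i:ℤ) + θ) = 0 := by ring
        rw [this, zeta_zero]
      rw [Finset.sum_congr rfl this]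
      simp
    rw [Finset.sum_congr rfl key]
    simp [Finset.sum_const]
    ring
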